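/- Let μ be a finite Borel measure on ℝ^d and let R̄_δ(x,y) = C_δ R̄(|x−y|²/(4δ²)) with R̄ : ℝ → ℝ nonnegative, bounded, measurable and C_δ > 0. Set ω̄(x) = ∫ R̄_δ(x,y) dμ(y) and suppose there is c > 0 with ω̄(x) ≥ c for μ-almost every x. For m ∈ L²(μ) define the weighted average m̄(x) = ω̄(x)⁻¹ ∫ m(y) R̄_δ(x,y) dμ(y). Then ∫ (m̄(x) − m(x))² dμ(x) ≤ (1/c) ∬ (m(x) − m(y))² R̄_δ(x,y) dμ(y) dμ(x). -/

import Mathlib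

open MeasureTheory

/-- Elementary Cauchy–Schwarz for a nonnegative weight `w`:
`(∫ f w)² ≤ (∫ w) (∫ f² w)`, assuming `0 < ∫ w`. -/
lemma cs_aux {α : Type*} [MeasurableSpace α] (μ : Measure α) (f w : α → ℝ)
    (hw : ∀ a, 0 ≤ w a) (hW : 0 < ∫ a, w a ∂μ)
    (hw1 : Integrable w μ) (hfw : Integrable (fun a => f a * w a) μ)
    (hf2w : Integrable (fun a => f a ^ 2 * w a) μ) :
    (∫ a, f a * w a ∂μ) ^ 2 ≤ (∫ a, w a ∂μ) * ∫ a, f a ^ 2 * w a ∂μ := by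
  set W := ∫ a, w a ∂μ with hWdef
  set B := ∫ a, f a * w a ∂μ with hBdef
  set A := ∫ a, f a ^ 2 * w a ∂μ with hAdef
  set t := B / W with htdef
  have hWne : W ≠ 0 := ne_of_gt hW
  have hBt : B = t * W := by rw [htdef, div_mul_cancel₀ B hWne]
  have key : 0 ≤ A - 2 * t * B + t ^ 2 * W := by
    have h1 : (fun a => (f a - t) ^ 2 * w a)
        = fun a => ((f a ^ 2 * w a - (2 * t) * (f a * w a)) + t ^ 2 * w a) := by
      funext a; ring
    have h2 : ∫ a, (f a - t) ^ 2 * w a ∂μ = A - 2 * t * B + t ^ 2 * W := by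
      have i2 : Integrable (fun a => 2 * t * (f a * w a)) μ := by
        exact hfw.const_mul (2 * t)
      have i3 : Integrable (fun a => t ^ 2 * w a) μ := by
        exact hw1.const_mul (t ^ 2)
      have i1 : Integrable (fun a => f a ^ 2 * w a - 2 * t * (f a * w a)) μ := hf2w.sub i2
      rw [h1, integral_add i1 i3, integral_sub hf2w i2, integral_const_mul, integral_const_mul]
    rw [← h2]
    exact integral_nonneg fun a => mul_nonneg (sq_nonneg _) (hw a)
  nlinarith [key, hW, sq_nonneg t, mul_le_mul_of_nonneg_left key (le_of_lt hW)]

/-- the weighted kernel average `m̄(x) = ω̄(x)⁻¹ ∫ m(y) R̄_δ(x,y) dμ(y)`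
satisfies `∫ (m̄ − m)² dμ ≤ (1/c) ∬ (m(x) − m(y))² R̄_δ(x,y) dμ dμ` whenever
`ω̄ ≥ c > 0` μ-a.e. -/
theorem stmt12 {d : ℕ} (hd : 1 ≤ d)
    (μ : Measure (EuclideanSpace ℝ (Fin d))) [IsFiniteMeasure μ]
    (δ Cδ : ℝ) (hδ : 0 < δ) (hCδ : 0 < Cδ)
    (Rb : ℝ → ℝ) (hRbmeas : Measurable Rb) (hRbnn : ∀ r, 0 ≤ Rb r)
    (MRb : ℝ) (hRbbd : ∀ r, Rb r ≤ MRb)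
    (Rbδ : EuclideanSpace ℝ (Fin d) → EuclideanSpace ℝ (Fin d) → ℝ)
    (hRbδ : ∀ x y, Rbδ x y = Cδ * Rb (‖x - y‖ ^ 2 / (4 * δ ^ 2)))
    (ω : EuclideanSpace ℝ (Fin d) → ℝ) (hω : ∀ x, ω x = ∫ y, Rbδ x y ∂μ)
    (c : ℝ) (hc : 0 < c) (hωc : ∀ᵐ x ∂μ, c ≤ ω x)
    (m : EuclideanSpace ℝ (Fin d) → ℝ) (hm : MemLp m 2 μ)
    (mbar : EuclideanSpace ℝ (Fin d) → ℝ)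
    (hmbar : ∀ x, mbar x = (ω x)⁻¹ * ∫ y, m y * Rbδ x y ∂μ) :
    (∫ x, (mbar x - m x) ^ 2 ∂μ)
      ≤ (1 / c) * ∫ x, ∫ y, (m x - m y) ^ 2 * Rbδ x y ∂μ ∂μ := by
  -- basic facts about the kernel
  have hMRb0 : 0 ≤ MRb := le_trans (hRbnn 0) (hRbbd 0)
  have hKnn : ∀ x y, 0 ≤ Rbδ x y := fun x y => by
    rw [hRbδ]; exact mul_nonneg hCδ.le (hRbnn _)
  have hKbd : ∀ x y, Rbδ x y ≤ Cδ * MRb := fun x y => by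
    rw [hRbδ]; exact mul_le_mul_of_nonneg_left (hRbbd _) hCδ.le
  have hKnorm : ∀ x y, ‖Rbδ x y‖ ≤ Cδ * MRb := fun x y => by
    rw [Real.norm_eq_abs, abs_of_nonneg (hKnn x y)]; exact hKbd x y
  -- measurability of the kernel
  have hKmeas2 : Measurable (fun p : EuclideanSpace ℝ (Fin d) × EuclideanSpace ℝ (Fin d) =>
      Rbδ p.1 p.2) := by
    have h1 : Measurable (fun p : EuclideanSpace ℝ (Fin d) × EuclideanSpace ℝ (Fin d) =>
        ‖p.1 - p.2‖ ^ 2 / (4 * δ ^ 2)) :=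
      (((continuous_fst.sub continuous_snd).norm.pow 2).div_const _).measurable
    simp only [hRbδ]
    exact (hRbmeas.comp h1).const_mul _
  have hKmeas : ∀ x, Measurable (fun y => Rbδ x y) :=
    fun x => hKmeas2.comp (measurable_const.prodMk measurable_id)
  -- integrability facts
  have hmint : Integrable m μ := hm.integrable one_le_two
  have hm2int : Integrable (fun y => m y ^ 2) μ :=
    (memLp_two_iff_integrable_sq hm.aestronglyMeasurable).mp hm
  have hWint : ∀ x, Integrable (fun y => Rbδ x y) μ := fun x =>
    Integrable.mono' (integrable_const (Cδ * MRb)) (hKmeas x).aestronglyMeasurable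
      (ae_of_all _ fun y => hKnorm x y)
  have hmKint : ∀ x, Integrable (fun y => m y * Rbδ x y) μ := fun x => by
    refine Integrable.mono' ((hmint.abs.const_mul (Cδ * MRb)))
      (hmint.aestronglyMeasurable.mul (hKmeas x).aestronglyMeasurable)
      (ae_of_all _ fun y => ?_)
    rw [Real.norm_eq_abs, abs_mul]
    calc |m y| * |Rbδ x y| ≤ |m y| * (Cδ * MRb) := by
          exact mul_le_mul_of_nonneg_left
            (by rw [abs_of_nonneg (hKnn x y)]; exact hKbd x y) (abs_nonneg _)
      _ = Cδ * MRb * |m y| := by ring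
  have hsqint : ∀ x, Integrable (fun y => (m y - m x) ^ 2) μ := fun x => by
    have h : (fun y => (m y - m x) ^ 2)
        = fun y => (m y ^ 2 - (2 * m x) * m y) + m x ^ 2 := by funext y; ring
    rw [h]
    exact (hm2int.sub (hmint.const_mul _)).add (integrable_const _)
  have hsqKint : ∀ x, Integrable (fun y => (m y - m x) ^ 2 * Rbδ x y) μ := fun x => by
    refine Integrable.mono' ((hsqint x).const_mul (Cδ * MRb))
      ((((hm.aestronglyMeasurable.aemeasurable.sub aemeasurable_const).pow_const
          2).aestronglyMeasurable).mul (hKmeas x).aestronglyMeasurable)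
      (ae_of_all _ fun y => ?_)
    rw [Real.norm_eq_abs, abs_mul, abs_of_nonneg (sq_nonneg _), abs_of_nonneg (hKnn x y)]
    calc (m y - m x) ^ 2 * Rbδ x y ≤ (m y - m x) ^ 2 * (Cδ * MRb) :=
          mul_le_mul_of_nonneg_left (hKbd x y) (sq_nonneg _)
      _ = Cδ * MRb * (m y - m x) ^ 2 := by ring
  -- integrability of the double-integral function
  have hG : Integrable (fun x => ∫ y, (m x - m y) ^ 2 * Rbδ x y ∂μ) μ := by
    have hFmeas : AEStronglyMeasurable
        (fun p : EuclideanSpace ℝ (Fin d) × EuclideanSpace ℝ (Fin d) =>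
          (m p.1 - m p.2) ^ 2 * Rbδ p.1 p.2) (μ.prod μ) := by
      exact (((hm.aestronglyMeasurable.comp_fst.aemeasurable.sub
        hm.aestronglyMeasurable.comp_snd.aemeasurable).pow_const 2).aestronglyMeasurable).mul
        hKmeas2.aestronglyMeasurable
    have hdom : Integrable
        (fun p : EuclideanSpace ℝ (Fin d) × EuclideanSpace ℝ (Fin d) =>
          Cδ * MRb * (m p.1 - m p.2) ^ 2) (μ.prod μ) := by
      have h : (fun p : EuclideanSpace ℝ (Fin d) × EuclideanSpace ℝ (Fin d) =>
          (m p.1 - m p.2) ^ 2)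
          = fun p => (m p.1 ^ 2 * (1 : ℝ) - 2 * (m p.1 * m p.2)) + (1 : ℝ) * m p.2 ^ 2 := by
        funext p; ring
      refine Integrable.const_mul ?_ _
      rw [h]
      exact ((hm2int.mul_prod (integrable_const 1)).sub
        ((hmint.mul_prod hmint).const_mul 2)).add ((integrable_const 1).mul_prod hm2int)
    have hF : Integrable
        (fun p : EuclideanSpace ℝ (Fin d) × EuclideanSpace ℝ (Fin d) =>
          (m p.1 - m p.2) ^ 2 * Rbδ p.1 p.2) (μ.prod μ) := by
      refine Integrable.mono' hdom hFmeas (ae_of_all _ fun p => ?_)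
      rw [Real.norm_eq_abs, abs_mul, abs_of_nonneg (sq_nonneg _), abs_of_nonneg (hKnn _ _)]
      calc (m p.1 - m p.2) ^ 2 * Rbδ p.1 p.2 ≤ (m p.1 - m p.2) ^ 2 * (Cδ * MRb) :=
            mul_le_mul_of_nonneg_left (hKbd _ _) (sq_nonneg _)
        _ = Cδ * MRb * (m p.1 - m p.2) ^ 2 := by ring
    exact hF.integral_prod_left
  -- pointwise a.e. bound
  have hpt : ∀ᵐ x ∂μ, (mbar x - m x) ^ 2
      ≤ (1 / c) * ∫ y, (m x - m y) ^ 2 * Rbδ x y ∂μ := by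
    filter_upwards [hωc] with x hx
    have hωpos : 0 < ω x := lt_of_lt_of_le hc hx
    have hωne : ω x ≠ 0 := ne_of_gt hωpos
    set B := ∫ y, (m y - m x) * Rbδ x y ∂μ with hBdef
    set A := ∫ y, (m y - m x) ^ 2 * Rbδ x y ∂μ with hAdef
    have hA0 : 0 ≤ A := integral_nonneg fun y => mul_nonneg (sq_nonneg _) (hKnn x y)
    have hBmK : Integrable (fun y => (m y - m x) * Rbδ x y) μ := by
      have h : (fun y => (m y - m x) * Rbδ x y)
          = fun y => m y * Rbδ x y - m x * Rbδ x y := by funext y; ring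
      rw [h]
      exact (hmKint x).sub ((hWint x).const_mul _)
    have hsplit : ∫ y, m y * Rbδ x y ∂μ = B + m x * ω x := by
      have h : B = ∫ y, m y * Rbδ x y ∂μ - m x * ω x := by
        rw [hBdef]
        have h2 : (fun y => (m y - m x) * Rbδ x y)
            = fun y => m y * Rbδ x y - m x * Rbδ x y := by funext y; ring
        rw [h2, integral_sub (hmKint x) ((hWint x).const_mul (m x)), integral_const_mul, hω]
      linarith [h]
    have hdiff : mbar x - m x = (ω x)⁻¹ * B := by
      rw [hmbar, hsplit]; field_simp; ring
    have hCS : B ^ 2 ≤ ω x * A := by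
      have := cs_aux μ (fun y => m y - m x) (fun y => Rbδ x y)
        (fun y => hKnn x y) (by rw [← hω]; exact hωpos) (hWint x) hBmK (hsqKint x)
      rw [← hω] at this
      exact this
    have hAeq : A = ∫ y, (m x - m y) ^ 2 * Rbδ x y ∂μ := by
      rw [hAdef]
      exact integral_congr_ae (Filter.Eventually.of_forall fun y => by ring)
    rw [hdiff]
    calc ((ω x)⁻¹ * B) ^ 2 = (ω x)⁻¹ ^ 2 * B ^ 2 := by ring
      _ ≤ (ω x)⁻¹ ^ 2 * (ω x * A) := mul_le_mul_of_nonneg_left hCS (by positivity)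
      _ = (ω x)⁻¹ * A := by
          rw [pow_two]
          field_simp
      _ ≤ (1 / c) * A := by
          rw [one_div]
          exact mul_le_mul_of_nonneg_right
            ((inv_anti₀ hc hx : (ω x)⁻¹ ≤ c⁻¹)) hA0
      _ = (1 / c) * ∫ y, (m x - m y) ^ 2 * Rbδ x y ∂μ := by rw [hAeq]
  -- conclude
  calc (∫ x, (mbar x - m x) ^ 2 ∂μ)
      ≤ ∫ x, (1 / c) * ∫ y, (m x - m y) ^ 2 * Rbδ x y ∂μ ∂μ :=
        integral_mono_of_nonneg (ae_of_all _ fun x => sq_nonneg _) (hG.const_mul _) hpt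
    _ = (1 / c) * ∫ x, ∫ y, (m x - m y) ^ 2 * Rbδ x y ∂μ ∂μ := integral_const_mul _ _
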